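/- Let u : ℝ^J → ℝ ∪ {−∞} be upper semicontinuous and concave with u(x⁰) finite and u(x + r·g) > u(x) whenever u(x) > −∞ and r > 0, and let D(x) := sup{r ∈ ℝ : u(x⁰ + x − r·g) ≥ u(x⁰)}. If p ∈ ℝ^J is a supergradient of D at x̄ (in particular D(x̄) is finite) and p·g = 1, then the post-trade position x¹ := x⁰ + x̄ − (p·x̄)·g satisfies u(x¹) ≥ u(x⁰). -/
import Mathlib


open scoped BigOperators
open Metric Filter

noncomputable section

/-- The inner product `p·y = ∑ j, p j * y j`. -/
def dotp {J : Type*} [Fintype J] (p y : EuclideanSpace ℝ J) : ℝ := ∑ j, p j * y j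

/-- A function `u : ℝ^J → ℝ ∪ {±∞}` is concave iff its hypograph is convex. -/
def HypoConcave {J : Type*} [Fintype J] (u : EuclideanSpace ℝ J → EReal) : Prop :=
  Convex ℝ {q : EuclideanSpace ℝ J × ℝ | (q.2 : EReal) ≤ u q.1}

/-- Indifference price function `D(x) = sup {r ∈ ℝ : u(x⁰ + x − r·g) ≥ u(x⁰)}`,
the supremum being taken in `ℝ ∪ {±∞}`. -/
def indiff {J : Type*} [Fintype J] (u : EuclideanSpace ℝ J → EReal)
    (x0 g x : EuclideanSpace ℝ J) : EReal :=
  sSup {e : EReal | ∃ r : ℝ, e = (r : EReal) ∧ u x0 ≤ u (x0 + x - r • g)}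

/-- `p` is a supergradient of `D` at `xb`: `D xb` is finite and
`D x ≤ D xb + p·(x − xb)` for all `x`. -/
def IsSupergradient {J : Type*} [Fintype J] (D : EuclideanSpace ℝ J → EReal)
    (p xb : EuclideanSpace ℝ J) : Prop :=
  D xb ≠ ⊥ ∧ D xb ≠ ⊤ ∧ ∀ x, D x ≤ D xb + ((dotp p (x - xb) : ℝ) : EReal)

/-- Optimal value `v(z)` of the perturbed market clearing problem `(P_z)`. -/
def marketValue {I J : Type*} [Fintype I] [Fintype J]
    (D : I → EuclideanSpace ℝ J → EReal) (z : EuclideanSpace ℝ J) : EReal :=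
  sSup {e : EReal | ∃ x : I → EuclideanSpace ℝ J, (∑ i, x i) = z ∧ e = ∑ i, D i (x i)}

/-- Optimal value of problem `(P')`, the total consumer surplus at allocation `w`. -/
def CSval {I J : Type*} [Fintype I] [Fintype J]
    (u : I → EuclideanSpace ℝ J → EReal) (g : EuclideanSpace ℝ J)
    (w : I → EuclideanSpace ℝ J) : EReal :=
  sSup {e : EReal | ∃ s : ℝ, e = (s : EReal) ∧ ∃ z : I → EuclideanSpace ℝ J,
    (∑ i, z i) + s • g = ∑ i, w i ∧ ∀ i, u i (w i) ≤ u i (z i)}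

/-- Recession function `u^∞(y) = inf_{α>0} (u(x⁰ + α·y) − u(x⁰))/α`. -/
def recession {J : Type*} [Fintype J] (u : EuclideanSpace ℝ J → EReal)
    (x0 y : EuclideanSpace ℝ J) : EReal :=
  sInf {e : EReal | ∃ α : ℝ, 0 < α ∧ e = (u (x0 + α • y) - u x0) / (α : EReal)}

/-- Pareto efficiency of an allocation `x` with total endowment `∑ i, x i`. -/
def ParetoEfficient {I J : Type*} [Fintype I] [Fintype J]
    (u : I → EuclideanSpace ℝ J → EReal) (x : I → EuclideanSpace ℝ J) : Prop :=
  ¬ ∃ x' : I → EuclideanSpace ℝ J, (∑ i, x' i) = (∑ i, x i) ∧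
      (∀ i, u i (x i) ≤ u i (x' i)) ∧ ∃ i, u i (x i) < u i (x' i)

/-- the post-trade position is at least as good as the endowment. -/
theorem post_trade_improves
    {J : Type*} [Fintype J] [Nonempty J]
    (u : EuclideanSpace ℝ J → EReal) (g x0 : EuclideanSpace ℝ J)
    (husc : UpperSemicontinuous u)
    (hconc : HypoConcave u)
    (hne_top : ∀ x, u x ≠ ⊤)
    (hx0 : u x0 ≠ ⊥)
    (hmono : ∀ x, ∀ r : ℝ, u x ≠ ⊥ → 0 < r → u x < u (x + r • g))
    (p xb : EuclideanSpace ℝ J)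
    (hsg : IsSupergradient (indiff u x0 g) p xb)
    (hpg : dotp p g = 1) :
    u x0 ≤ u (x0 + xb - dotp p xb • g) := by
  obtain ⟨hbot, htop, hineq⟩ := hsg
  set d : ℝ := (indiff u x0 g xb).toReal with hd_def
  have hd : indiff u x0 g xb = (d : EReal) := (EReal.coe_toReal htop hbot).symm
  -- Step A : dotp p xb ≤ d
  have h0mem : ((0 : ℝ) : EReal) ∈
      {e : EReal | ∃ r : ℝ, e = (r : EReal) ∧ u x0 ≤ u (x0 + 0 - r • g)} := by
    refine ⟨0, rfl, ?_⟩
    simp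
  have h0 : ((0 : ℝ) : EReal) ≤ indiff u x0 g 0 := le_sSup h0mem
  have hA : dotp p xb ≤ d := by
    have h1 : ((0 : ℝ) : EReal) ≤ ((d - dotp p xb : ℝ) : EReal) := by
      have h2 := h0.trans (hineq 0)
      have hdot : dotp p (0 - xb) = -(dotp p xb) := by
        simp [dotp, Finset.sum_neg_distrib]
      rw [hd, hdot] at h2
      calc ((0 : ℝ) : EReal) ≤ (d : EReal) + ((-(dotp p xb) : ℝ) : EReal) := h2
        _ = ((d - dotp p xb : ℝ) : EReal) := by
            rw [← EReal.coe_add]; ring_nf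
    have := EReal.coe_le_coe_iff.1 h1
    linarith
  -- The set S
  set S : Set ℝ := {r : ℝ | u x0 ≤ u (x0 + xb - r • g)} with hS_def
  -- S nonempty
  have hSne : S.Nonempty := by
    by_contra h
    rw [Set.not_nonempty_iff_eq_empty] at h
    have : {e : EReal | ∃ r : ℝ, e = (r : EReal) ∧ u x0 ≤ u (x0 + xb - r • g)} = ∅ := by
      ext e
      simp only [Set.mem_setOf_eq, Set.mem_empty_iff_false, iff_false]
      rintro ⟨r, rfl, hr⟩
      have : r ∈ S := hr
      rw [h] at this
      exact this
    exact hbot (by rw [indiff, this, sSup_empty])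
  -- S bounded above by d
  have hSbdd : ∀ r ∈ S, r ≤ d := by
    intro r hr
    have : ((r : ℝ) : EReal) ≤ indiff u x0 g xb := le_sSup ⟨r, rfl, hr⟩
    rw [hd] at this
    exact_mod_cast this
  -- S closed
  have hc : Continuous (fun r : ℝ => x0 + xb - r • g) :=
    continuous_const.sub (continuous_id.smul continuous_const)
  have hSclosed : IsClosed S := by
    rw [← isOpen_compl_iff]
    rw [isOpen_iff_mem_nhds]
    intro r hr
    have hlt : u (x0 + xb - r • g) < u x0 := not_le.1 hr
    have hev : ∀ᶠ x in nhds (x0 + xb - r • g), u x < u x0 :=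
      husc _ _ hlt
    have := (hc.tendsto r).eventually hev
    filter_upwards [this] with s hs
    exact not_le.2 hs
  -- d ∈ S
  have hdS : d ∈ S := by
    have hbdd : BddAbove S := ⟨d, fun r hr => hSbdd r hr⟩
    have hsup_le : sSup S ≤ d := csSup_le hSne hSbdd
    have hle_sup : d ≤ sSup S := by
      have : indiff u x0 g xb ≤ ((sSup S : ℝ) : EReal) := by
        apply sSup_le
        rintro e ⟨r, rfl, hr⟩
        exact_mod_cast le_csSup hbdd hr
      rw [hd] at this
      exact_mod_cast this
    have : sSup S = d := le_antisymm hsup_le hle_sup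
    exact this ▸ hSclosed.csSup_mem hSne hbdd
  -- conclude
  have hud : u x0 ≤ u ((x0 + xb) - d • g) := by
    have := hdS
    simpa [hS_def, add_sub_assoc] using this
  rcases eq_or_lt_of_le hA with heq | hlt
  · rw [heq]
    simpa [add_sub_assoc] using hud
  · have hvec : x0 + xb - dotp p xb • g = ((x0 + xb) - d • g) + (d - dotp p xb) • g := by
      rw [sub_smul]; abel
    rw [hvec]
    have hne : u ((x0 + xb) - d • g) ≠ ⊥ := fun h => hx0 (le_bot_iff.1 (h ▸ hud))
    exact hud.trans (le_of_lt (hmono _ _ hne (by linarith)))
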